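/- Let P be a complex polynomial of degree n ≥ 1, and let Q = A/B be a non-constant complex rational function with A and B coprime polynomials. Let q₁, q₂, …, q_l be the multiplicities of the poles of Q on the Riemann sphere, i.e., the multiplicities of the roots of B, together with the number deg A − deg B in case deg A > deg B (the multiplicity of the pole at infinity). If gcd(q₁, q₂, …, q_l, n) = 1, then the bivariate polynomial E_{P,Q}(x, y) = P(x)·B(y) − A(y) is irreducible over ℂ. -/

import Mathlib

set_option linter.unusedSectionVars false
set_option linter.unusedTactic false
set_option maxHeartbeats 1000000

open Polynomial Finset
set_option linter.unusedSectionVars false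
set_option maxHeartbeats 1000000

open Polynomial Finset

section ValLemmas
variable {R : Type*} [CommRing R] [IsDomain R]
variable {v : R → ℤ}
variable (hmul : ∀ r s : R, r ≠ 0 → s ≠ 0 → v (r * s) = v r + v s)
variable (hadd : ∀ r s : R, r ≠ 0 → s ≠ 0 → r + s ≠ 0 → min (v r) (v s) ≤ v (r + s))

include hmul in
lemma val_neg {r : R} (hr : r ≠ 0) : v (-r) = v r := by
  have h1 : v ((1:R) * 1) = v 1 + v 1 := hmul 1 1 one_ne_zero one_ne_zero
  rw [one_mul] at h1
  have hv1 : v 1 = 0 := by omega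
  have hn1 : v ((-1:R) * -1) = v (-1) + v (-1) := hmul (-1) (-1) (by simp) (by simp)
  rw [neg_mul_neg, one_mul, hv1] at hn1
  have : v (-1 : R) = 0 := by omega
  have := hmul (-1) r (by simp) hr
  rw [neg_one_mul] at this
  omega

include hmul hadd in
lemma val_add_eq {x y : R} (hx : x ≠ 0) (hy : y ≠ 0) (hlt : v x < v y) :
    x + y ≠ 0 ∧ v (x + y) = v x := by
  have hne : x + y ≠ 0 := by
    intro h
    have hyx : y = -x := by linear_combination h
    rw [hyx, val_neg hmul hx] at hlt
    omega
  constructor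
  · exact hne
  · have h1 : min (v x) (v y) ≤ v (x + y) := hadd x y hx hy hne
    have h2 : min (v (x + y)) (v (-y)) ≤ v (x + y + -y) := by
      have := hadd (x + y) (-y) hne (neg_ne_zero.mpr hy) (by ring_nf; simpa using hx)
      simpa using this
    rw [val_neg hmul hy] at h2
    have h3 : x + y + -y = x := by ring
    rw [h3] at h2
    omega

end ValLemmas

section Sums
variable {R : Type*} [CommRing R] [IsDomain R]
variable {v : R → ℤ}
variable (hmul : ∀ r s : R, r ≠ 0 → s ≠ 0 → v (r * s) = v r + v s)
variable (hadd : ∀ r s : R, r ≠ 0 → s ≠ 0 → r + s ≠ 0 → min (v r) (v s) ≤ v (r + s))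

include hmul hadd in
lemma val_sum_ge {ι : Type*} (s : Finset ι) (u : ι → R) (hs : s.Nonempty)
    (hu : ∀ t ∈ s, u t ≠ 0) (hsum : ∑ t ∈ s, u t ≠ 0) :
    s.inf' hs (fun t => v (u t)) ≤ v (∑ t ∈ s, u t) := by
  classical
  induction s using Finset.induction with
  | empty => simp at hs
  | @insert a s ha ih =>
    by_cases hse : s.Nonempty
    · rw [Finset.sum_insert ha] at hsum ⊢
      rw [Finset.inf'_insert (H := hse)]
      by_cases hS : ∑ t ∈ s, u t = 0
      · rw [hS, add_zero]
        exact le_trans (min_le_left _ _) (le_refl _)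
      · have h1 := ih hse (fun t ht => hu t (Finset.mem_insert_of_mem ht)) hS
        have h2 := hadd (u a) (∑ t ∈ s, u t) (hu a (Finset.mem_insert_self a s)) hS hsum
        exact le_trans (min_le_min (le_refl _) h1) h2
    · have : s = ∅ := Finset.not_nonempty_iff_eq_empty.mp hse
      subst this
      simp

include hmul hadd in
lemma val_sum_strict {ι : Type*} [DecidableEq ι] (s : Finset ι) (u : ι → R) (t₀ : ι)
    (ht₀ : t₀ ∈ s) (hu : ∀ t ∈ s, u t ≠ 0)
    (hstrict : ∀ t ∈ s, t ≠ t₀ → v (u t₀) < v (u t)) :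
    (∑ t ∈ s, u t) ≠ 0 ∧ v (∑ t ∈ s, u t) = v (u t₀) := by
  have hsplit : ∑ t ∈ s, u t = u t₀ + ∑ t ∈ s.erase t₀, u t :=
    (Finset.add_sum_erase s u ht₀).symm
  by_cases hS : ∑ t ∈ s.erase t₀, u t = 0
  · rw [hsplit, hS, add_zero]
    exact ⟨hu t₀ ht₀, rfl⟩
  · have hne' : (s.erase t₀).Nonempty := by
      rcases Finset.eq_empty_or_nonempty (s.erase t₀) with h | h
      · rw [h] at hS; simp at hS
      · exact h
    have h2 := val_sum_ge hmul hadd (s.erase t₀) u hne'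
      (fun t ht => hu t (Finset.mem_of_mem_erase ht)) hS
    obtain ⟨t₁, ht₁, he⟩ := Finset.exists_mem_eq_inf' hne' (fun t => v (u t))
    have hlt : v (u t₀) < v (∑ t ∈ s.erase t₀, u t) := by
      have := hstrict t₁ (Finset.mem_of_mem_erase ht₁) (Finset.ne_of_mem_erase ht₁)
      omega
    have := val_add_eq hmul hadd (hu t₀ ht₀) hS hlt
    rw [hsplit]
    exact this


include hmul hadd in
lemma slope_dvd (f g : R[X]) (hf : f ≠ 0) (hg : g ≠ 0)
    (n : ℕ) (hnpos : 0 < n) (hn : (f * g).natDegree = n) (q : ℤ)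
    (h0 : (f * g).coeff 0 ≠ 0)
    (hends : (n : ℤ) * v ((f * g).coeff 0) = (n : ℤ) * v ((f * g).coeff n) + q * n)
    (hint : ∀ i : ℕ, 0 < i → i < n → (f * g).coeff i ≠ 0 →
      (n : ℤ) * v ((f * g).coeff 0) < (n : ℤ) * v ((f * g).coeff i) + q * i) :
    (n : ℤ) ∣ q * f.natDegree := by
  classical
  set m := f.natDegree with hm
  set k := g.natDegree with hk
  have hmk : m + k = n := by rw [hm, hk, ← Polynomial.natDegree_mul hf hg, hn]
  set wf : ℕ → ℤ := fun a => (n : ℤ) * v (f.coeff a) + q * a with hwf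
  set wg : ℕ → ℤ := fun b => (n : ℤ) * v (g.coeff b) + q * b with hwg
  have hf0 : f.coeff 0 ≠ 0 := by
    intro h; rw [Polynomial.mul_coeff_zero, h, zero_mul] at h0; exact h0 rfl
  have hg0 : g.coeff 0 ≠ 0 := by
    intro h; rw [Polynomial.mul_coeff_zero, h, mul_zero] at h0; exact h0 rfl
  have hfne : f.support.Nonempty := Polynomial.support_nonempty.mpr hf
  have hgne : g.support.Nonempty := Polynomial.support_nonempty.mpr hg
  set Vf := f.support.inf' hfne wf with hVf
  set Vg := g.support.inf' hgne wg with hVg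
  have hVf_le : ∀ a ∈ f.support, Vf ≤ wf a := fun a ha => Finset.inf'_le _ ha
  have hVg_le : ∀ b ∈ g.support, Vg ≤ wg b := fun b hb => Finset.inf'_le _ hb
  -- the minimal attaining indices
  have hAf : (f.support.filter (fun a => wf a = Vf)).Nonempty := by
    obtain ⟨a, ha, he⟩ := Finset.exists_mem_eq_inf' hfne wf
    exact ⟨a, Finset.mem_filter.mpr ⟨ha, he.symm⟩⟩
  have hAg : (g.support.filter (fun b => wg b = Vg)).Nonempty := by
    obtain ⟨b, hb, he⟩ := Finset.exists_mem_eq_inf' hgne wg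
    exact ⟨b, Finset.mem_filter.mpr ⟨hb, he.symm⟩⟩
  set a₀ := (f.support.filter (fun a => wf a = Vf)).min' hAf with ha₀
  set b₀ := (g.support.filter (fun b => wg b = Vg)).min' hAg with hb₀
  have ha₀mem := Finset.min'_mem _ hAf
  have hb₀mem := Finset.min'_mem _ hAg
  rw [Finset.mem_filter] at ha₀mem hb₀mem
  have ha₀supp : a₀ ∈ f.support := ha₀mem.1
  have hb₀supp : b₀ ∈ g.support := hb₀mem.1
  have ha₀val : wf a₀ = Vf := ha₀mem.2
  have hb₀val : wg b₀ = Vg := hb₀mem.2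
  have ha₀strict : ∀ a ∈ f.support, a < a₀ → Vf < wf a := by
    intro a ha hlt
    rcases lt_or_eq_of_le (hVf_le a ha) with h | h
    · exact h
    · exfalso
      have : a₀ ≤ a := Finset.min'_le _ a (Finset.mem_filter.mpr ⟨ha, h.symm⟩)
      omega
  have hb₀strict : ∀ b ∈ g.support, b < b₀ → Vg < wg b := by
    intro b hb hlt
    rcases lt_or_eq_of_le (hVg_le b hb) with h | h
    · exact h
    · exfalso
      have : b₀ ≤ b := Finset.min'_le _ b (Finset.mem_filter.mpr ⟨hb, h.symm⟩)
      omega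
  -- nonzero coefficients of the product have weight ≥ Vf + Vg
  have hlower : ∀ i : ℕ, (f * g).coeff i ≠ 0 →
      Vf + Vg ≤ (n : ℤ) * v ((f * g).coeff i) + q * i := by
    intro i hi
    have hco : (f * g).coeff i =
        ∑ p ∈ (Finset.HasAntidiagonal.antidiagonal i).filter (fun p => f.coeff p.1 * g.coeff p.2 ≠ 0),
          f.coeff p.1 * g.coeff p.2 := by
      rw [Finset.sum_filter_ne_zero, Polynomial.coeff_mul]
    have hsne : ((Finset.HasAntidiagonal.antidiagonal i).filter
        (fun p => f.coeff p.1 * g.coeff p.2 ≠ 0)).Nonempty :=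
      Finset.nonempty_of_sum_ne_zero (by rw [← hco]; exact hi)
    have hge := val_sum_ge hmul hadd _ (fun p : ℕ × ℕ => f.coeff p.1 * g.coeff p.2) hsne
      (fun t ht => (Finset.mem_filter.mp ht).2) (by rw [← hco]; exact hi)
    obtain ⟨p, hp, he⟩ := Finset.exists_mem_eq_inf' hsne
      (fun p : ℕ × ℕ => v (f.coeff p.1 * g.coeff p.2))
    rw [he] at hge
    rw [hco] at hi ⊢
    have hpmem := Finset.mem_filter.mp hp
    have hpadd : p.1 + p.2 = i := Finset.HasAntidiagonal.mem_antidiagonal.mp hpmem.1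
    have hfp : f.coeff p.1 ≠ 0 := fun h => hpmem.2 (by rw [h, zero_mul])
    have hgp : g.coeff p.2 ≠ 0 := fun h => hpmem.2 (by rw [h, mul_zero])
    have hvmul : v (f.coeff p.1 * g.coeff p.2) = v (f.coeff p.1) + v (g.coeff p.2) :=
      hmul _ _ hfp hgp
    have h1 : Vf ≤ wf p.1 := hVf_le p.1 (Polynomial.mem_support_iff.mpr hfp)
    have h2 : Vg ≤ wg p.2 := hVg_le p.2 (Polynomial.mem_support_iff.mpr hgp)
    have hnn : (0:ℤ) ≤ (n:ℤ) := Int.natCast_nonneg n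
    rw [hwf] at h1; rw [hwg] at h2
    simp only at h1 h2
    have hcast : ((p.1:ℤ) + p.2) = (i:ℤ) := by exact_mod_cast hpadd
    have hq : q * (p.1:ℤ) + q * (p.2:ℤ) = q * i := by rw [← mul_add, hcast]
    have hmulge := mul_le_mul_of_nonneg_left hge hnn
    rw [hvmul, mul_add] at hmulge
    linarith
  -- the strict minimum at c = a₀ + b₀
  set c := a₀ + b₀ with hc
  have hcterm : (f * g).coeff c ≠ 0 ∧
      v ((f * g).coeff c) = v (f.coeff a₀ * g.coeff b₀) := by
    have hco : (f * g).coeff c =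
        ∑ p ∈ (Finset.HasAntidiagonal.antidiagonal c).filter (fun p => f.coeff p.1 * g.coeff p.2 ≠ 0),
          f.coeff p.1 * g.coeff p.2 := by
      rw [Finset.sum_filter_ne_zero, Polynomial.coeff_mul]
    have ht₀mem : (a₀, b₀) ∈ (Finset.HasAntidiagonal.antidiagonal c).filter
        (fun p => f.coeff p.1 * g.coeff p.2 ≠ 0) := by
      refine Finset.mem_filter.mpr ⟨Finset.HasAntidiagonal.mem_antidiagonal.mpr rfl, ?_⟩
      exact mul_ne_zero (Polynomial.mem_support_iff.mp ha₀supp)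
        (Polynomial.mem_support_iff.mp hb₀supp)
    have hstr : ∀ p ∈ (Finset.HasAntidiagonal.antidiagonal c).filter
        (fun p => f.coeff p.1 * g.coeff p.2 ≠ 0), p ≠ (a₀, b₀) →
        v (f.coeff a₀ * g.coeff b₀) < v (f.coeff p.1 * g.coeff p.2) := by
      intro p hp hne
      have hpmem := Finset.mem_filter.mp hp
      have hpadd : p.1 + p.2 = c := Finset.HasAntidiagonal.mem_antidiagonal.mp hpmem.1
      have hfp : f.coeff p.1 ≠ 0 := fun h => hpmem.2 (by rw [h, zero_mul])
      have hgp : g.coeff p.2 ≠ 0 := fun h => hpmem.2 (by rw [h, mul_zero])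
      have hv1 : v (f.coeff p.1 * g.coeff p.2) = v (f.coeff p.1) + v (g.coeff p.2) :=
        hmul _ _ hfp hgp
      have hv0 : v (f.coeff a₀ * g.coeff b₀) = v (f.coeff a₀) + v (g.coeff b₀) :=
        hmul _ _ (Polynomial.mem_support_iff.mp ha₀supp) (Polynomial.mem_support_iff.mp hb₀supp)
      have hane : p.1 ≠ a₀ := by
        intro h
        apply hne
        have : p.2 = b₀ := by omega
        exact Prod.ext h this
      have hfsupp : p.1 ∈ f.support := Polynomial.mem_support_iff.mpr hfp
      have hgsupp : p.2 ∈ g.support := Polynomial.mem_support_iff.mpr hgp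
      have hwsum : wf a₀ + wg b₀ < wf p.1 + wg p.2 := by
        rcases lt_or_gt_of_ne hane with h | h
        · have h1 := ha₀strict p.1 hfsupp h
          have h2 := hVg_le p.2 hgsupp
          omega
        · have hblt : p.2 < b₀ := by omega
          have h1 := hb₀strict p.2 hgsupp hblt
          have h2 := hVf_le p.1 hfsupp
          omega
      rw [hwf, hwg] at hwsum
      simp only at hwsum
      have hq : q * (p.1:ℤ) + q * (p.2:ℤ) = q * (a₀:ℤ) + q * (b₀:ℤ) := by
        have hcc : ((p.1:ℤ) + p.2) = (a₀:ℤ) + b₀ := by exact_mod_cast hpadd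
        rw [← mul_add, ← mul_add, hcc]
      have hnpos' : (0:ℤ) < (n:ℤ) := by exact_mod_cast hnpos
      rw [hv0, hv1]
      nlinarith
    have := val_sum_strict hmul hadd _ (fun p : ℕ × ℕ => f.coeff p.1 * g.coeff p.2)
      (a₀, b₀) ht₀mem (fun t ht => (Finset.mem_filter.mp ht).2) hstr
    rw [← hco] at this
    exact this
  obtain ⟨hcne, hcval⟩ := hcterm
  have hvterm : v (f.coeff a₀ * g.coeff b₀) = v (f.coeff a₀) + v (g.coeff b₀) :=
    hmul _ _ (Polynomial.mem_support_iff.mp ha₀supp) (Polynomial.mem_support_iff.mp hb₀supp)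
  have hwc : (n : ℤ) * v ((f * g).coeff c) + q * c = Vf + Vg := by
    rw [hcval, hvterm, ← ha₀val, ← hb₀val, hwf, hwg]
    simp only
    push_cast [hc]
    ring
  -- c is 0 or n
  have hcle : c ≤ n := by
    have h1 : a₀ ≤ m := Polynomial.le_natDegree_of_ne_zero (Polynomial.mem_support_iff.mp ha₀supp)
    have h2 : b₀ ≤ k := Polynomial.le_natDegree_of_ne_zero (Polynomial.mem_support_iff.mp hb₀supp)
    omega
  have h0low := hlower 0 h0
  simp only [Nat.cast_zero, mul_zero, add_zero] at h0low
  have hcases : c = 0 ∨ c = n := by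
    by_contra hcon
    push_neg at hcon
    have h1 : 0 < c := Nat.pos_of_ne_zero hcon.1
    have h2 : c < n := lt_of_le_of_ne hcle hcon.2
    have := hint c h1 h2 hcne
    omega
  -- in both cases wh 0 = wh n = Vf + Vg
  have hwh0 : (n : ℤ) * v ((f * g).coeff 0) = Vf + Vg := by
    rcases hcases with h | h
    · rw [h] at hwc; simpa using hwc
    · rw [h] at hwc
      omega
  have hwhn : (n : ℤ) * v ((f * g).coeff n) + q * n = Vf + Vg := by omega
  -- bottom equality
  have hbot : (n : ℤ) * v (f.coeff 0 * g.coeff 0) = Vf + Vg := by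
    rw [← Polynomial.mul_coeff_zero]; exact hwh0
  have hvb : v (f.coeff 0 * g.coeff 0) = v (f.coeff 0) + v (g.coeff 0) := hmul _ _ hf0 hg0
  have hwf0 : wf 0 + wg 0 = Vf + Vg := by
    rw [hwf, hwg]; simp only
    push_cast
    rw [hvb] at hbot
    ring_nf
    ring_nf at hbot
    linarith
  have hwf0' : wf 0 = Vf := by
    have h1 := hVf_le 0 (Polynomial.mem_support_iff.mpr hf0)
    have h2 := hVg_le 0 (Polynomial.mem_support_iff.mpr hg0)
    omega
  -- top equality
  have hfm : f.coeff m ≠ 0 := by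
    rw [hm]; exact Polynomial.mem_support_iff.mp (Polynomial.natDegree_mem_support_of_nonzero hf)
  have hgk : g.coeff k ≠ 0 := by
    rw [hk]; exact Polynomial.mem_support_iff.mp (Polynomial.natDegree_mem_support_of_nonzero hg)
  have htopco : (f * g).coeff n = f.coeff m * g.coeff k := by
    rw [← hmk, hm, hk]
    exact Polynomial.coeff_mul_degree_add_degree f g
  have hvt : v (f.coeff m * g.coeff k) = v (f.coeff m) + v (g.coeff k) := hmul _ _ hfm hgk
  have hwtop : wf m + wg k = Vf + Vg := by
    rw [htopco, hvt] at hwhn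
    rw [hwf, hwg]
    simp only
    have hcc : ((m:ℤ) + k) = (n:ℤ) := by exact_mod_cast hmk
    have : q * (m:ℤ) + q * (k:ℤ) = q * n := by rw [← mul_add, hcc]
    linarith [hwhn]
  have hwfm' : wf m = Vf := by
    have h1 := hVf_le m (Polynomial.mem_support_iff.mpr hfm)
    have h2 := hVg_le k (Polynomial.mem_support_iff.mpr hgk)
    omega
  rw [hwf] at hwf0' hwfm'
  simp only at hwf0' hwfm'
  refine ⟨v (f.coeff 0) - v (f.coeff m), ?_⟩
  push_cast at hwf0' hwfm' ⊢
  linarith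
end Sums

lemma sep_irred_poly (P A B : Polynomial ℂ) (n : ℕ) (hn : 1 ≤ n) (hdegP : P.natDegree = n)
    (hB : B ≠ 0) (hcop : IsCoprime A B)
    (hQnc : ¬ ∃ c : ℂ, A = Polynomial.C c * B)
    (hgcd : ∀ d : ℕ, d ∣ n →
      (∀ z : ℂ, B.eval z = 0 → d ∣ B.rootMultiplicity z) →
      (B.natDegree < A.natDegree → d ∣ (A.natDegree - B.natDegree)) →
      d = 1) :
    Irreducible (P.map (Polynomial.C : ℂ →+* Polynomial ℂ) * Polynomial.C B
      - Polynomial.C A) := by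
  classical
  set E : Polynomial (Polynomial ℂ) :=
    P.map (Polynomial.C : ℂ →+* Polynomial ℂ) * Polynomial.C B - Polynomial.C A with hE
  have hP : P ≠ 0 := by
    intro h; rw [h, Polynomial.natDegree_zero] at hdegP; omega
  have hPn : P.coeff n ≠ 0 := by
    rw [← hdegP]; exact Polynomial.mem_support_iff.mp (Polynomial.natDegree_mem_support_of_nonzero hP)
  have hcoeff : ∀ i : ℕ, 0 < i → E.coeff i = Polynomial.C (P.coeff i) * B := by
    intro i hi
    rw [hE]
    simp [Polynomial.coeff_sub, Polynomial.coeff_mul_C, Polynomial.coeff_map,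
      Polynomial.coeff_C, Nat.pos_iff_ne_zero.mp hi]
  have hcoeff0 : E.coeff 0 = Polynomial.C (P.coeff 0) * B - A := by
    rw [hE]
    simp [Polynomial.coeff_sub, Polynomial.coeff_mul_C, Polynomial.coeff_map, Polynomial.coeff_C]
  have hE0 : E.coeff 0 ≠ 0 := by
    rw [hcoeff0]
    intro h
    exact hQnc ⟨P.coeff 0, by linear_combination -h⟩
  have hAz : ∀ z : ℂ, B.eval z = 0 → A.eval z ≠ 0 := by
    intro z hz hA
    obtain ⟨u, w, huw⟩ := hcop
    have := congrArg (Polynomial.eval z) huw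
    simp [hz, hA] at this
  have hmapne : P.map (Polynomial.C : ℂ →+* Polynomial ℂ) ≠ 0 := by
    exact Polynomial.map_ne_zero hP
  have hdegmap : (P.map (Polynomial.C : ℂ →+* Polynomial ℂ)).natDegree = n := by
    rw [Polynomial.natDegree_map_eq_of_injective Polynomial.C_injective, hdegP]
  have hdegmulE : (P.map (Polynomial.C : ℂ →+* Polynomial ℂ) * Polynomial.C B).natDegree = n := by
    rw [Polynomial.natDegree_mul hmapne (by simp [hB]), hdegmap, Polynomial.natDegree_C, add_zero]
  have hdegE : E.natDegree = n := by
    rw [hE, Polynomial.natDegree_sub_eq_left_of_natDegree_lt, hdegmulE]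
    rw [hdegmulE, Polynomial.natDegree_C]
    omega
  have hEn : E.coeff n ≠ 0 := by
    rw [hcoeff n (by omega)]
    exact mul_ne_zero (by simpa using hPn) hB
  have hEne : E ≠ 0 := fun h => hEn (by rw [h]; simp)
  rw [irreducible_iff]
  constructor
  · intro hu
    have := Polynomial.natDegree_eq_zero_of_isUnit hu
    rw [hdegE] at this; omega
  intro F G hFG
  have hFne : F ≠ 0 := fun h => hEne (by rw [hFG, h, zero_mul])
  have hGne : G ≠ 0 := fun h => hEne (by rw [hFG, h, mul_zero])
  have hmk : F.natDegree + G.natDegree = n := by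
    rw [← Polynomial.natDegree_mul hFne hGne, ← hFG, hdegE]
  set m := F.natDegree with hm
  -- divisibility at each finite pole
  have hdvd : ∀ z : ℂ, B.eval z = 0 → n ∣ B.rootMultiplicity z * m := by
    intro z hz
    set qz := B.rootMultiplicity z with hqz
    have hqzpos : 0 < qz := (Polynomial.rootMultiplicity_pos hB).mpr hz
    have key := slope_dvd (R := Polynomial ℂ) (v := fun r => (Polynomial.rootMultiplicity z r : ℤ))
      (fun r s hr hs => by
        beta_reduce
        rw [Polynomial.rootMultiplicity_mul (mul_ne_zero hr hs)]; push_cast; ring)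
      (fun r s hr hs hrs => by
        beta_reduce
        have := Polynomial.rootMultiplicity_add z hrs
        simp only [le_min_iff, min_le_iff] at this ⊢
        push_cast
        omega)
      F G hFne hGne n (by omega) (by rw [← hFG, hdegE]) (-(qz : ℤ))
      (by rw [← hFG]; exact hE0)
      (by
        beta_reduce
        rw [← hFG]
        have hv0 : Polynomial.rootMultiplicity z (E.coeff 0) = 0 := by
          apply Polynomial.rootMultiplicity_eq_zero
          rw [hcoeff0]
          simp only [Polynomial.IsRoot, Polynomial.eval_sub, Polynomial.eval_mul,
            Polynomial.eval_C, hz, mul_zero, zero_sub, neg_eq_zero]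
          exact hAz z hz
        have hvn : Polynomial.rootMultiplicity z (E.coeff n) = qz := by
          rw [hcoeff n (by omega),
            Polynomial.rootMultiplicity_mul (by rw [← hcoeff n (by omega)]; exact hEn),
            Polynomial.rootMultiplicity_C]
          omega
        rw [hv0, hvn]
        push_cast
        ring)
      (by
        intro i hi0 hin hne
        beta_reduce
        rw [← hFG] at hne ⊢
        have hv0 : Polynomial.rootMultiplicity z (E.coeff 0) = 0 := by
          apply Polynomial.rootMultiplicity_eq_zero
          rw [hcoeff0]
          simp only [Polynomial.IsRoot, Polynomial.eval_sub, Polynomial.eval_mul,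
            Polynomial.eval_C, hz, mul_zero, zero_sub, neg_eq_zero]
          exact hAz z hz
        have hvi : Polynomial.rootMultiplicity z (E.coeff i) = qz := by
          rw [hcoeff i hi0,
            Polynomial.rootMultiplicity_mul (by rw [← hcoeff i hi0]; exact hne),
            Polynomial.rootMultiplicity_C]
          omega
        rw [hv0, hvi]
        have h1 : (i:ℤ) < n := by exact_mod_cast hin
        have h2 : (0:ℤ) < qz := by exact_mod_cast hqzpos
        push_cast
        nlinarith [mul_pos h2 (by omega : (0:ℤ) < (n:ℤ) - i)])
    have key2 : (n : ℤ) ∣ (qz : ℤ) * m := by rwa [neg_mul, dvd_neg] at key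
    exact_mod_cast key2
  -- divisibility at the pole at infinity
  have hinf : B.natDegree < A.natDegree → n ∣ (A.natDegree - B.natDegree) * m := by
    intro hAB
    set dA := A.natDegree with hdA
    set dB := B.natDegree with hdB
    have hdeg0 : (E.coeff 0).natDegree = dA := by
      rw [hcoeff0]
      apply Polynomial.natDegree_sub_eq_right_of_natDegree_lt
      calc (Polynomial.C (P.coeff 0) * B).natDegree
          ≤ (Polynomial.C (P.coeff 0)).natDegree + B.natDegree := Polynomial.natDegree_mul_le
        _ < dA := by rw [Polynomial.natDegree_C]; omega
    have hdegi : ∀ i : ℕ, 0 < i → E.coeff i ≠ 0 → (E.coeff i).natDegree = dB := by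
      intro i hi hne
      rw [hcoeff i hi] at hne ⊢
      have hpi : Polynomial.C (P.coeff i) ≠ 0 := fun h => hne (by rw [h, zero_mul])
      rw [Polynomial.natDegree_mul hpi hB, Polynomial.natDegree_C, zero_add]
    have key := slope_dvd (R := Polynomial ℂ) (v := fun r => -(r.natDegree : ℤ))
      (fun r s hr hs => by
        beta_reduce
        rw [Polynomial.natDegree_mul hr hs]; push_cast; ring)
      (fun r s hr hs hrs => by
        beta_reduce
        have := Polynomial.natDegree_add_le r s
        simp only [le_min_iff, min_le_iff, le_max_iff] at this ⊢
        push_cast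
        omega)
      F G hFne hGne n (by omega) (by rw [← hFG, hdegE]) ((dB : ℤ) - dA)
      (by rw [← hFG]; exact hE0)
      (by
        beta_reduce
        rw [← hFG]
        have hvn : (E.coeff n).natDegree = dB := hdegi n (by omega) hEn
        rw [hdeg0, hvn]
        push_cast
        ring)
      (by
        intro i hi0 hiin hne
        beta_reduce
        rw [← hFG] at hne ⊢
        rw [hdeg0, hdegi i hi0 hne]
        have h1 : (i:ℤ) < n := by exact_mod_cast hiin
        have h2 : (dB:ℤ) < dA := by exact_mod_cast hAB
        nlinarith [mul_pos (by omega : (0:ℤ) < (dA:ℤ) - dB) (by omega : (0:ℤ) < (n:ℤ) - i)])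
    have key2 : (n : ℤ) ∣ ((dA - dB : ℕ) : ℤ) * m := by
      have hc : ((dA - dB : ℕ) : ℤ) * m = -(((dB : ℤ) - dA) * m) := by
        push_cast [Nat.cast_sub (le_of_lt hAB)]
        ring
      rw [hc, dvd_neg]
      exact key
    exact_mod_cast key2
  -- number theory: m = 0 or m = n
  have hmn : m = 0 ∨ m = n := by
    set g := Nat.gcd n m with hg
    have hgpos : 0 < g := Nat.gcd_pos_of_pos_left m (by omega)
    set d := n / g with hd
    have hdn : d ∣ n := Nat.div_dvd_of_dvd (Nat.gcd_dvd_left n m)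
    have haux : ∀ q : ℕ, n ∣ q * m → d ∣ q := by
      intro q hq
      have h1 : g * d = n := Nat.mul_div_cancel' (Nat.gcd_dvd_left n m)
      have h2 : g ∣ m := Nat.gcd_dvd_right n m
      obtain ⟨m', hm'⟩ := h2
      have h3 : g * d ∣ g * (q * m') := by
        rw [h1]
        have : q * m = g * (q * m') := by rw [hm']; ring
        rwa [this] at hq
      have h4 : d ∣ q * m' := (Nat.mul_dvd_mul_iff_left hgpos).mp h3
      have h5 : Nat.Coprime d m' := by
        have := Nat.coprime_div_gcd_div_gcd (m := n) (n := m) hgpos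
        have hm'' : m' = m / g := by
          rw [hm', Nat.mul_div_cancel_left _ hgpos]
        rw [hm'']
        exact this
      exact h5.dvd_of_dvd_mul_right h4
    have hd1 : d = 1 := hgcd d hdn (fun z hz => haux _ (hdvd z hz)) (fun h => haux _ (hinf h))
    have hgn : g = n := by
      have h1 : g * d = n := Nat.mul_div_cancel' (Nat.gcd_dvd_left n m)
      rw [hd1, mul_one] at h1
      exact h1
    have hnm : n ∣ m := hgn ▸ Nat.gcd_dvd_right n m
    rcases Nat.eq_zero_or_pos m with h | h
    · left; exact h
    · right
      have := Nat.le_of_dvd h hnm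
      omega
  -- conclude unit
  rcases hmn with h | h
  · left
    obtain ⟨c, hc⟩ := Polynomial.natDegree_eq_zero.mp h
    have hdvdc : ∀ i : ℕ, c ∣ E.coeff i := by
      intro i
      refine ⟨G.coeff i, ?_⟩
      rw [hFG, ← hc, Polynomial.coeff_C_mul]
    have hcB : c ∣ B := by
      have h1 := hdvdc n
      rw [hcoeff n (by omega)] at h1
      have hu : IsUnit (Polynomial.C (P.coeff n) : Polynomial ℂ) :=
        Polynomial.isUnit_C.mpr (isUnit_iff_ne_zero.mpr hPn)
      exact (hu.dvd_mul_left).mp h1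
    have hcA : c ∣ A := by
      have h1 := hdvdc 0
      rw [hcoeff0] at h1
      have h2 : c ∣ Polynomial.C (P.coeff 0) * B := Dvd.dvd.mul_left hcB _
      have := dvd_sub h2 h1
      simpa using this
    have : IsUnit c := hcop.isUnit_of_dvd' hcA hcB
    rw [← hc]
    exact Polynomial.isUnit_C.mpr this
  · right
    have hk : G.natDegree = 0 := by omega
    obtain ⟨c, hc⟩ := Polynomial.natDegree_eq_zero.mp hk
    have hdvdc : ∀ i : ℕ, c ∣ E.coeff i := by
      intro i
      refine ⟨F.coeff i, ?_⟩
      rw [hFG, ← hc, mul_comm, Polynomial.coeff_C_mul]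
    have hcB : c ∣ B := by
      have h1 := hdvdc n
      rw [hcoeff n (by omega)] at h1
      have hu : IsUnit (Polynomial.C (P.coeff n) : Polynomial ℂ) :=
        Polynomial.isUnit_C.mpr (isUnit_iff_ne_zero.mpr hPn)
      exact (hu.dvd_mul_left).mp h1
    have hcA : c ∣ A := by
      have h1 := hdvdc 0
      rw [hcoeff0] at h1
      have h2 : c ∣ Polynomial.C (P.coeff 0) * B := Dvd.dvd.mul_left hcB _
      have := dvd_sub h2 h1
      simpa using this
    have : IsUnit c := hcop.isUnit_of_dvd' hcA hcB
    rw [← hc]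
    exact Polynomial.isUnit_C.mpr this



/-- Theorem (irreducibility of separated variable curves, polynomial case):
if `P` is a polynomial of degree `n ≥ 1` and `Q = A/B` is a non-constant rational
function (with `A`, `B` coprime) whose pole multiplicities `q₁, …, q_l`
(the root multiplicities of `B`, together with `deg A − deg B` when `deg A > deg B`)
satisfy `gcd(q₁, …, q_l, n) = 1`, then `E_{P,Q}(x, y) = P(x)·B(y) − A(y)` is
irreducible over `ℂ`. The gcd condition is expressed as: every natural number
dividing `n` and all the pole multiplicities equals `1`. -/
theorem separated_variables_irreducible
    (P A B : Polynomial ℂ) (n : ℕ) (hn : 1 ≤ n) (hdegP : P.natDegree = n)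
    (hB : B ≠ 0) (hcop : IsCoprime A B)
    (hQnc : ¬ ∃ c : ℂ, A = Polynomial.C c * B)
    (hgcd : ∀ d : ℕ, d ∣ n →
      (∀ z : ℂ, B.eval z = 0 → d ∣ B.rootMultiplicity z) →
      (B.natDegree < A.natDegree → d ∣ (A.natDegree - B.natDegree)) →
      d = 1) :
    Irreducible
      (Polynomial.aeval (MvPolynomial.X 0 : MvPolynomial (Fin 2) ℂ) P *
        Polynomial.aeval (MvPolynomial.X 1 : MvPolynomial (Fin 2) ℂ) B -
        Polynomial.aeval (MvPolynomial.X 1 : MvPolynomial (Fin 2) ℂ) A) := by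
  classical
  set ψ : MvPolynomial (Fin 1) ℂ ≃ₐ[ℂ] Polynomial ℂ :=
    (MvPolynomial.finSuccEquiv ℂ 0).trans
      (Polynomial.mapAlgEquiv (MvPolynomial.isEmptyAlgEquiv ℂ (Fin 0))) with hψ
  set Φ : MvPolynomial (Fin 2) ℂ ≃ₐ[ℂ] Polynomial (Polynomial ℂ) :=
    (MvPolynomial.finSuccEquiv ℂ 1).trans (Polynomial.mapAlgEquiv ψ) with hΦ
  refine (MulEquiv.irreducible_iff Φ).mp ?_
  have hX0 : Φ (MvPolynomial.X 0) = Polynomial.X := by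
    rw [hΦ]
    simp [MvPolynomial.finSuccEquiv_X_zero, Polynomial.mapAlgEquiv]
  have hX1 : Φ (MvPolynomial.X 1) = Polynomial.C Polynomial.X := by
    rw [hΦ]
    have h1 : (MvPolynomial.X (1 : Fin 2) : MvPolynomial (Fin 2) ℂ)
        = MvPolynomial.X (0 : Fin 1).succ := rfl
    have hψX : ψ (MvPolynomial.X 0) = Polynomial.X := by
      rw [hψ]
      simp [MvPolynomial.finSuccEquiv_X_zero, Polynomial.mapAlgEquiv]
    rw [AlgEquiv.trans_apply, h1, MvPolynomial.finSuccEquiv_X_succ]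
    simp [Polynomial.mapAlgEquiv, hψX]
  have hmap : Φ (Polynomial.aeval (MvPolynomial.X 0 : MvPolynomial (Fin 2) ℂ) P *
        Polynomial.aeval (MvPolynomial.X 1 : MvPolynomial (Fin 2) ℂ) B -
        Polynomial.aeval (MvPolynomial.X 1 : MvPolynomial (Fin 2) ℂ) A) =
      P.map (Polynomial.C : ℂ →+* Polynomial ℂ) * Polynomial.C B - Polynomial.C A := by
    rw [map_sub, map_mul,
      ← Polynomial.aeval_algHom_apply Φ (MvPolynomial.X 0) P,
      ← Polynomial.aeval_algHom_apply Φ (MvPolynomial.X 1) B,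
      ← Polynomial.aeval_algHom_apply Φ (MvPolynomial.X 1) A,
      hX0, hX1]
    have haevalX : ∀ p : Polynomial ℂ,
        Polynomial.aeval (Polynomial.X : Polynomial (Polynomial ℂ)) p =
          p.map (Polynomial.C : ℂ →+* Polynomial ℂ) := by
      intro p
      have h1 : (Polynomial.C : ℂ →+* Polynomial ℂ) = algebraMap ℂ (Polynomial ℂ) := by
        ext a
        simp
      rw [h1, ← Polynomial.aeval_map_algebraMap (Polynomial ℂ),
        Polynomial.aeval_X_left_apply]
    have haevalC : ∀ p : Polynomial ℂ,
        Polynomial.aeval (Polynomial.C Polynomial.X : Polynomial (Polynomial ℂ)) p =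
          Polynomial.C p := by
      intro p
      have := Polynomial.aeval_algHom_apply (Polynomial.CAlgHom (R := ℂ)
        (A := Polynomial ℂ)) Polynomial.X p
      simp only [Polynomial.CAlgHom] at this
      rw [Polynomial.aeval_X_left_apply] at this
      simpa using this
    rw [haevalX, haevalC, haevalC]
  rw [hmap]
  exact sep_irred_poly P A B n hn hdegP hB hcop hQnc hgcd
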